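/- Let R be a finite commutative local ring of order q^n with J(R)^2 = 0 and R/J(R) of order q, and let u ∈ J(R) be nonzero. Then the characteristic polynomial of the product matrix A_u(R) equals (-1)^q λ^{q^n - 2q + 2}(λ^2 - q^{n-1})^{q-1}; in particular the nonzero eigenvalues of A_u(R) are ±q^{(n-1)/2}, each with multiplicity q-1. -/

import Mathlib

open Polynomial Finset
open scoped Matrix

private lemma sum3 {m : Type*} [Fintype m] (μ : m → ℝ) (s t : ℝ)
    (h : ∀ i, μ i = 0 ∨ μ i = s ∨ μ i = t) (hst : s ≠ t)
    (f : ℝ → ℝ) (hf0 : f 0 = 0) :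
    ∑ i, f (μ i)
      = (univ.filter fun i => μ i = s).card • f s
        + (univ.filter fun i => μ i = t).card • f t := by
  classical
  rw [← Finset.sum_filter_add_sum_filter_not univ (fun i => μ i = s) (fun i => f (μ i))]
  congr 1
  · rw [Finset.sum_congr rfl (fun i hi => by rw [(Finset.mem_filter.mp hi).2]),
      Finset.sum_const]
  · rw [← Finset.sum_filter_add_sum_filter_not (univ.filter fun i => ¬ μ i = s)
      (fun i => μ i = t) (fun i => f (μ i))]
    have h1 : (univ.filter fun i => ¬ μ i = s).filter (fun i => μ i = t)
        = univ.filter fun i => μ i = t := by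
      ext i
      simp only [Finset.filter_filter, Finset.mem_filter, Finset.mem_univ, true_and]
      exact ⟨fun h2 => h2.2, fun h2 => ⟨by rw [h2]; exact fun hh => hst hh.symm, h2⟩⟩
    have h2 : ∀ i ∈ (univ.filter fun i => ¬ μ i = s).filter (fun i => ¬ μ i = t),
        f (μ i) = 0 := by
      intro i hi
      simp only [Finset.filter_filter, Finset.mem_filter] at hi
      rcases h i with h0 | h0 | h0
      · rw [h0, hf0]
      · exact absurd h0 hi.2.1
      · exact absurd h0 hi.2.2
    rw [Finset.sum_eq_zero h2, add_zero, h1,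
      Finset.sum_congr rfl (fun i hi => by rw [(Finset.mem_filter.mp hi).2]),
      Finset.sum_const]

private lemma prod3 {m : Type*} [Fintype m] (μ : m → ℝ) (s t : ℝ)
    (h : ∀ i, μ i = 0 ∨ μ i = s ∨ μ i = t) (hst : s ≠ t) (hs : s ≠ 0) (ht : t ≠ 0)
    (f : ℝ → ℝ) :
    ∏ i, f (μ i)
      = f s ^ (univ.filter fun i => μ i = s).card
        * f t ^ (univ.filter fun i => μ i = t).card
        * f 0 ^ (univ.filter fun i => μ i = 0).card := by
  classical
  rw [← Finset.prod_filter_mul_prod_filter_not univ (fun i => μ i = s) (fun i => f (μ i))]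
  have h1 : (univ.filter fun i => ¬ μ i = s).filter (fun i => μ i = t)
      = univ.filter fun i => μ i = t := by
    ext i
    simp only [Finset.filter_filter, Finset.mem_filter, Finset.mem_univ, true_and]
    exact ⟨fun h2 => h2.2, fun h2 => ⟨by rw [h2]; exact fun hh => hst hh.symm, h2⟩⟩
  have h2 : (univ.filter fun i => ¬ μ i = s).filter (fun i => ¬ μ i = t)
      = univ.filter fun i => μ i = 0 := by
    ext i
    simp only [Finset.filter_filter, Finset.mem_filter, Finset.mem_univ, true_and]
    constructor
    · rintro ⟨h2, h3⟩
      rcases h i with h0 | h0 | h0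
      · exact h0
      · exact absurd h0 h2
      · exact absurd h0 h3
    · intro h0
      rw [h0]
      exact ⟨fun hh => hs hh.symm, fun hh => ht hh.symm⟩
  rw [← Finset.prod_filter_mul_prod_filter_not (univ.filter fun i => ¬ μ i = s)
      (fun i => μ i = t) (fun i => f (μ i)), h1, h2,
    Finset.prod_congr rfl (fun i hi => by rw [(Finset.mem_filter.mp hi).2]),
    Finset.prod_congr (rfl : univ.filter (fun i => μ i = t) = _)
      (fun i hi => by rw [(Finset.mem_filter.mp hi).2]),
    Finset.prod_congr (rfl : univ.filter (fun i => μ i = 0) = _)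
      (fun i hi => by rw [(Finset.mem_filter.mp hi).2]),
    Finset.prod_const, Finset.prod_const, Finset.prod_const, mul_assoc]

private lemma card3 {m : Type*} [Fintype m] (μ : m → ℝ) (s t : ℝ)
    (h : ∀ i, μ i = 0 ∨ μ i = s ∨ μ i = t) (hst : s ≠ t) (hs : s ≠ 0) (ht : t ≠ 0) :
    (univ.filter fun i => μ i = s).card + (univ.filter fun i => μ i = t).card
      + (univ.filter fun i => μ i = 0).card = Fintype.card m := by
  classical
  have h1 : (univ.filter fun i => ¬ μ i = s).filter (fun i => μ i = t)
      = univ.filter fun i => μ i = t := by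
    ext i
    simp only [Finset.filter_filter, Finset.mem_filter, Finset.mem_univ, true_and]
    exact ⟨fun h2 => h2.2, fun h2 => ⟨by rw [h2]; exact fun hh => hst hh.symm, h2⟩⟩
  have h2 : (univ.filter fun i => ¬ μ i = s).filter (fun i => ¬ μ i = t)
      = univ.filter fun i => μ i = 0 := by
    ext i
    simp only [Finset.filter_filter, Finset.mem_filter, Finset.mem_univ, true_and]
    constructor
    · rintro ⟨h2, h3⟩
      rcases h i with h0 | h0 | h0
      · exact h0
      · exact absurd h0 h2
      · exact absurd h0 h3
    · intro h0
      rw [h0]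
      exact ⟨fun hh => hs hh.symm, fun hh => ht hh.symm⟩
  have e1 := Finset.card_filter_add_card_filter_not (s := univ)
    (p := fun i => μ i = s)
  have e2 := Finset.card_filter_add_card_filter_not
    (s := univ.filter fun i => ¬ μ i = s) (p := fun i => μ i = t)
  rw [h1, h2] at e2
  rw [Finset.card_univ] at e1
  omega


private lemma herm_aux {m : Type*} [Fintype m] [DecidableEq m] (A : Matrix m m ℝ)
    (hA : A.IsHermitian) (c : ℝ) (hc : 0 < c) (k z : ℕ)
    (hcard : Fintype.card m = z + 2 * k)
    (h3 : A * A * A = c • A)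
    (ht : A.trace = 0)
    (ht2 : (A * A).trace = 2 * (k : ℝ) * c) :
    (∀ lam : ℝ, (A - lam • 1).det
        = (-lam) ^ z * ((Real.sqrt c - lam) ^ k * (-Real.sqrt c - lam) ^ k)) ∧
      A.charpoly = X ^ z * (X - C (Real.sqrt c)) ^ k * (X + C (Real.sqrt c)) ^ k := by
  classical
  set s := Real.sqrt c with hsdef
  have hs0 : 0 < s := Real.sqrt_pos.mpr hc
  have hs2 : s ^ 2 = c := Real.sq_sqrt hc.le
  have hsne : s ≠ -s := by intro h; nlinarith
  set μ := hA.eigenvalues with hμ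
  set U : Matrix m m ℝ := (hA.eigenvectorUnitary : Matrix m m ℝ) with hUdef
  have hU1 : U * star U = 1 := Matrix.mem_unitaryGroup_iff.mp hA.eigenvectorUnitary.2
  have hU2 : star U * U = 1 := Matrix.mem_unitaryGroup_iff'.mp hA.eigenvectorUnitary.2
  have hU2' : ∀ M : Matrix m m ℝ, star U * (U * M) = M := fun M => by
    rw [← Matrix.mul_assoc, hU2, Matrix.one_mul]
  have hspec : A = U * Matrix.diagonal μ * star U := by
    have := hA.spectral_theorem
    simpa [Function.comp] using this
  -- eigenvalues
  have heig : ∀ i, μ i = 0 ∨ μ i = s ∨ μ i = -s := by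
    intro i
    have hv := hA.mulVec_eigenvectorBasis i
    set v := ⇑(hA.eigenvectorBasis i) with hvdef
    have hv0 : v ≠ 0 := by
      have hb := hA.eigenvectorBasis.toBasis.ne_zero i
      rw [OrthonormalBasis.coe_toBasis] at hb
      intro hcon
      apply hb
      ext j
      exact congrFun hcon j
    have e2 : (A * A * A) *ᵥ v = (μ i ^ 3) • v := by
      simp only [← Matrix.mulVec_mulVec, hv, Matrix.mulVec_smul, smul_smul]
      rw [hμ]
      congr 1
      ring
    rw [h3] at e2
    have e3 : (c • A) *ᵥ v = (c * μ i) • v := by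
      rw [Matrix.smul_mulVec, hv, smul_smul]
    have e4 : (μ i ^ 3 - c * μ i) • v = 0 := by
      rw [sub_smul, e2.symm.trans e3, sub_self]
    rcases smul_eq_zero.mp e4 with h0 | h0
    · have h5 : μ i * ((μ i - s) * (μ i + s)) = 0 := by
        linear_combination h0 - μ i * hs2
      rcases mul_eq_zero.mp h5 with h6 | h6
      · exact Or.inl h6
      rcases mul_eq_zero.mp h6 with h7 | h7
      · exact Or.inr (Or.inl (by linarith [sub_eq_zero.mp h7]))
      · exact Or.inr (Or.inr (by linarith [eq_neg_of_add_eq_zero_left h7]))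
    · exact absurd h0 hv0
  -- determinant formula in terms of eigenvalues
  have hdet0 : ∀ lam : ℝ, (A - lam • 1).det = ∏ i, (μ i - lam) := by
    intro lam
    have h1 : A - lam • 1 = U * (Matrix.diagonal μ - lam • 1) * star U := by
      rw [Matrix.mul_sub, Matrix.sub_mul, ← hspec]
      congr 1
      rw [Matrix.mul_smul, Matrix.mul_one, Matrix.smul_mul, hU1]
    have hdd : Matrix.diagonal μ - lam • 1 = Matrix.diagonal (fun i => μ i - lam) := by
      ext i j
      by_cases hij : i = j <;>
        simp [Matrix.diagonal_apply, hij, Matrix.one_apply]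
    have hdu : U.det * (star U).det = 1 := by rw [← Matrix.det_mul, hU1, Matrix.det_one]
    rw [h1, Matrix.det_mul, Matrix.det_mul, hdd, Matrix.det_diagonal]
    calc U.det * (∏ i, (μ i - lam)) * (star U).det
        = (∏ i, (μ i - lam)) * (U.det * (star U).det) := by ring
      _ = ∏ i, (μ i - lam) := by rw [hdu, mul_one]
  -- traces
  have htr1 : ∑ i, μ i = 0 := by
    rw [← ht]
    conv_rhs => rw [hspec]
    rw [Matrix.trace_mul_comm, hU2', Matrix.trace_diagonal]
  have htr2 : ∑ i, μ i * μ i = 2 * (k : ℝ) * c := by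
    rw [← ht2]
    conv_rhs => rw [hspec]
    have e : U * Matrix.diagonal μ * star U * (U * Matrix.diagonal μ * star U)
        = U * Matrix.diagonal (fun i => μ i * μ i) * star U := by
      rw [← Matrix.diagonal_mul_diagonal]
      simp only [Matrix.mul_assoc]
      rw [hU2']
    rw [e, Matrix.trace_mul_comm, hU2', Matrix.trace_diagonal]
  -- counting
  set a := (univ.filter fun i => μ i = s).card with ha
  set b := (univ.filter fun i => μ i = -s).card with hb
  set zc := (univ.filter fun i => μ i = 0).card with hzc
  have hsum1 := sum3 μ s (-s) heig hsne (fun x => x) rfl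
  have hsum2 := sum3 μ s (-s) heig hsne (fun x => x * x) (by ring)
  rw [htr1] at hsum1
  rw [htr2] at hsum2
  simp only [nsmul_eq_mul, ← ha, ← hb] at hsum1 hsum2
  have hss : s * s = c := by nlinarith
  have hab : (a : ℝ) = b := by
    have : ((a : ℝ) - b) * s = 0 := by linarith [hsum1]
    rcases mul_eq_zero.mp this with h0 | h0
    · linarith
    · exact absurd h0 (ne_of_gt hs0)
  have habn : a = b := Nat.cast_injective hab
  have hsumk : (a : ℝ) + b = 2 * k := by
    have e1 : ((a : ℝ) + b) * c = 2 * (k : ℝ) * c := by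
      linear_combination -hsum2 - ((a : ℝ) + (b : ℝ)) * hss
    have := mul_right_cancel₀ (ne_of_gt hc) e1
    linarith
  have hak : a = k := by
    have : (a : ℝ) + a = 2 * k := by rw [hab] at hsumk ⊢; exact hsumk
    have : ((a + a : ℕ) : ℝ) = ((2 * k : ℕ) : ℝ) := by push_cast; linarith
    have := Nat.cast_injective this
    omega
  have hbk : b = k := by omega
  have hcard3 := card3 μ s (-s) heig hsne (ne_of_gt hs0) (by linarith)
  rw [← ha, ← hb, ← hzc, hcard, hak, hbk] at hcard3
  have hzk : zc = z := by omega
  -- main det formula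
  have hdet : ∀ lam : ℝ, (A - lam • 1).det
      = (-lam) ^ z * ((s - lam) ^ k * (-s - lam) ^ k) := by
    intro lam
    rw [hdet0 lam, prod3 μ s (-s) heig hsne (ne_of_gt hs0) (by linarith)
      (fun x => x - lam), ← ha, ← hb, ← hzc, hak, hbk, hzk, zero_sub]
    ring
  refine ⟨hdet, ?_⟩
  -- charpoly
  apply Polynomial.funext
  intro r
  have h1 : A.charpoly.eval r = ((Matrix.charmatrix A).map (Polynomial.evalRingHom r)).det := by
    rw [Matrix.charpoly,
      show eval r A.charmatrix.det = (Polynomial.evalRingHom r) A.charmatrix.det from rfl,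
      RingHom.map_det, RingHom.mapMatrix_apply]
  have h2 : (Matrix.charmatrix A).map (Polynomial.evalRingHom r) = r • (1 : Matrix m m ℝ) - A := by
    ext i j
    by_cases hij : i = j <;>
      simp [Matrix.charmatrix_apply, hij, Matrix.one_apply, Matrix.diagonal_apply]
  have h4 : r • (1 : Matrix m m ℝ) - A = -(A - r • 1) := by rw [neg_sub]
  have h5 : ((-1 : ℝ)) ^ (z + 2 * k) = (-1) ^ z := by
    rw [pow_add, pow_mul]
    norm_num
  rw [h1, h2, h4, Matrix.det_neg, hdet r, hcard, h5]
  simp only [eval_mul, eval_pow, eval_sub, eval_add, eval_X, eval_C]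
  calc ((-1 : ℝ)) ^ z * ((-r) ^ z * ((s - r) ^ k * (-s - r) ^ k))
      = ((-1) * -r) ^ z * (((s - r) * (-s - r)) ^ k) := by
        rw [mul_pow, mul_pow]; ring
    _ = r ^ z * (((r - s) * (r + s)) ^ k) := by
        rw [show ((-1 : ℝ)) * -r = r by ring,
          show (s - r) * (-s - r) = (r - s) * (r + s) by ring]
    _ = r ^ z * (r - s) ^ k * (r + s) ^ k := by rw [mul_pow]; ring

theorem charpoly_radical_elt_J_sq_zero {R : Type*} [CommRing R] [Fintype R] [DecidableEq R]
    [IsLocalRing R] (q n : ℕ) (hn : 0 < n)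
    (hcard : Fintype.card R = q ^ n)
    (hres : Nat.card (R ⧸ (⊥ : Ideal R).jacobson) = q)
    (hJ2 : ((⊥ : Ideal R).jacobson) ^ 2 = ⊥)
    (u : R) (hu : u ∈ (⊥ : Ideal R).jacobson) (hu0 : u ≠ 0) :
    let A : Matrix R R ℝ := Matrix.of fun x y => if x * y = u then 1 else 0
    (∀ lam : ℝ, (A - lam • 1).det =
      (-1 : ℝ) ^ q * lam ^ (q ^ n - 2 * q + 2) * (lam ^ 2 - (q : ℝ) ^ (n - 1)) ^ (q - 1)) ∧
    A.charpoly.rootMultiplicity (Real.sqrt ((q : ℝ) ^ (n - 1))) = q - 1 ∧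
    A.charpoly.rootMultiplicity (-Real.sqrt ((q : ℝ) ^ (n - 1))) = q - 1 := by
  intro A
  classical
  have hJmax : (⊥ : Ideal R).jacobson = IsLocalRing.maximalIdeal R :=
    IsLocalRing.jacobson_eq_maximalIdeal ⊥ bot_ne_top
  rw [hJmax] at hres hJ2 hu
  set J := IsLocalRing.maximalIdeal R with hJdef
  have hmulJ : ∀ a b : R, a ∈ J → b ∈ J → a * b = 0 := by
    intro a b ha hb
    have h0 : a * b ∈ J ^ 2 := by rw [sq]; exact Ideal.mul_mem_mul ha hb
    rw [hJ2] at h0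
    exact Ideal.mem_bot.mp h0
  have hmem : ∀ x : R, x ∈ J ↔ ¬ IsUnit x := fun x => IsLocalRing.mem_maximalIdeal x
  have hq2 : 2 ≤ q := by
    rw [← hres]
    have hnt : Nontrivial (R ⧸ J) := Ideal.Quotient.nontrivial_iff.mpr
      (IsLocalRing.maximalIdeal.isMaximal R).ne_top
    have hfin : Finite (R ⧸ J) := Finite.of_surjective _ Ideal.Quotient.mk_surjective
    have hft : Fintype (R ⧸ J) := Fintype.ofFinite _
    rw [Nat.card_eq_fintype_card]
    exact Fintype.one_lt_card_iff_nontrivial.mpr hnt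
  have hcardJ : Nat.card J = q ^ (n - 1) := by
    have h0 := Submodule.card_eq_card_quotient_mul_card (J : Submodule R R)
    rw [Nat.card_eq_fintype_card, hcard] at h0
    have hpw : q ^ n = q * q ^ (n - 1) := by
      conv_lhs => rw [show n = 1 + (n - 1) by omega]
      rw [pow_add, pow_one]
    rw [hres, hpw, mul_comm (Nat.card J) q] at h0
    exact Nat.eq_of_mul_eq_mul_left (by omega) h0.symm
  have hn2 : 2 ≤ n := by
    by_contra h
    have hn1 : n = 1 := by omega
    rw [hn1] at hcardJ
    simp only [Nat.sub_self, pow_zero] at hcardJ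
    have hsub : Subsingleton J := Nat.card_eq_one_iff_unique.mp hcardJ |>.1
    have : (⟨u, hu⟩ : J) = ⟨0, J.zero_mem⟩ := Subsingleton.elim _ _
    exact hu0 (congrArg Subtype.val this)
  set Jf : Finset R := univ.filter (fun x => x ∈ J) with hJf
  have hJfcard : Jf.card = q ^ (n - 1) := by
    rw [← hcardJ, Nat.card_eq_fintype_card, Fintype.card_subtype]
  have hann : ∀ y w : R, y ∈ J → y ≠ 0 → (y * w = 0 ↔ w ∈ J) := by
    intro y w hy hy0
    constructor
    · intro h0
      by_contra hw
      have hwu : IsUnit w := by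
        by_contra hnu; exact hw ((hmem w).mpr hnu)
      obtain ⟨wu, rfl⟩ := hwu
      apply hy0
      calc y = y * ↑wu * ↑wu⁻¹ := by rw [mul_assoc, Units.mul_inv, mul_one]
        _ = 0 := by rw [h0, zero_mul]
    · intro hw; exact hmulJ y w hy hw
  have hcount : ∀ y a : R, y ∈ J → y ≠ 0 → ∀ z₀, y * z₀ = a →
      (univ.filter (fun z => y * z = a)).card = q ^ (n - 1) := by
    intro y a hy hy0 z₀ hz₀
    rw [← hJfcard]
    apply Finset.card_bij (fun z _ => z - z₀)
    · intro z hz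
      have hz' : y * z = a := (Finset.mem_filter.mp hz).2
      refine Finset.mem_filter.mpr ⟨Finset.mem_univ _, ?_⟩
      exact (hann y (z - z₀) hy hy0).mp (by rw [mul_sub, hz', hz₀, sub_self])
    · intro z1 h1 z2 h2 he
      have := sub_left_injective (G := R) he
      exact this
    · intro b hb
      refine ⟨b + z₀, Finset.mem_filter.mpr ⟨Finset.mem_univ _, ?_⟩, by ring⟩
      rw [mul_add, hz₀, hmulJ y b hy (Finset.mem_filter.mp hb).2, zero_add]
  have hcount1 : ∀ y a : R, IsUnit y → (univ.filter (fun z => y * z = a)).card = 1 := by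
    intro y a hy
    rw [Finset.card_eq_one]
    refine ⟨↑hy.unit⁻¹ * a, ?_⟩
    ext z
    simp only [Finset.mem_filter, Finset.mem_univ, true_and, Finset.mem_singleton]
    constructor
    · intro h0
      rw [← h0, ← mul_assoc, IsUnit.val_inv_mul, one_mul]
    · intro h0
      rw [h0, ← mul_assoc, IsUnit.mul_val_inv, one_mul]
  set Uf : Finset R := univ.filter (fun x => IsUnit x) with hUf
  have hUfJf : univ.filter (fun x : R => ¬ IsUnit x) = Jf := by
    ext x
    simp only [hJf, Finset.mem_filter, Finset.mem_univ, true_and]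
    exact ⟨fun h => (hmem x).mpr h, fun h => (hmem x).mp h⟩
  have hUfcard : Uf.card = q ^ n - q ^ (n - 1) := by
    have h0 := Finset.card_filter_add_card_filter_not (s := univ)
      (p := fun x : R => IsUnit x)
    rw [hUfJf, hJfcard, Finset.card_univ, hcard] at h0
    rw [hUf]
    omega
  have hun : ¬ IsUnit u := (hmem u).mp hu
  set Sf : Finset R := univ.filter (fun x => ¬ IsUnit x ∧ ∃ y, x * y = u) with hSf
  have himg : Sf = Uf.image (fun v => u * v) := by
    ext x
    simp only [hSf, hUf, Finset.mem_filter, Finset.mem_univ, true_and, Finset.mem_image]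
    constructor
    · rintro ⟨hx, y, hy⟩
      have hyu : IsUnit y := by
        by_contra hy'
        exact hu0 (by rw [← hy, hmulJ x y ((hmem x).mpr hx) ((hmem y).mpr hy')])
      refine ⟨↑hyu.unit⁻¹, (hyu.unit⁻¹).isUnit, ?_⟩
      rw [← hy, mul_assoc, IsUnit.mul_val_inv, mul_one]
    · rintro ⟨v, hv, rfl⟩
      constructor
      · intro hx
        exact hun (by
          have : u = u * v * ↑hv.unit⁻¹ := by rw [mul_assoc, IsUnit.mul_val_inv, mul_one]
          rw [this]; exact hx.mul (hv.unit⁻¹).isUnit)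
      · exact ⟨↑hv.unit⁻¹, by rw [mul_assoc, IsUnit.mul_val_inv, mul_one]⟩
  have hSfcard : Sf.card = q - 1 := by
    have h0 := Finset.card_eq_sum_card_image (fun v => u * v) Uf
    have h1 : ∀ x ∈ Uf.image (fun v => u * v),
        (Uf.filter (fun v => u * v = x)).card = q ^ (n - 1) := by
      intro x hx
      obtain ⟨v₀, hv₀u, hv₀⟩ := Finset.mem_image.mp hx
      have hv₀unit : IsUnit v₀ := (Finset.mem_filter.mp hv₀u).2
      have he : Uf.filter (fun v => u * v = x) = univ.filter (fun v => u * v = x) := by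
        ext v
        simp only [hUf, Finset.filter_filter, Finset.mem_filter, Finset.mem_univ, true_and]
        refine ⟨fun h => h.2, fun h => ⟨?_, h⟩⟩
        by_contra hv
        have hvJ : v ∈ J := (hmem v).mpr hv
        have : x = 0 := by rw [← h, hmulJ u v hu hvJ]
        rw [this] at hv₀
        exact hu0 (by
          have : u = u * v₀ * ↑hv₀unit.unit⁻¹ := by
            rw [mul_assoc, IsUnit.mul_val_inv, mul_one]
          rw [this, hv₀, zero_mul])
      rw [he]
      exact hcount u x hu hu0 v₀ hv₀
    rw [Finset.sum_congr rfl h1, Finset.sum_const, smul_eq_mul, hUfcard, ← himg] at h0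
    have hq0 : 0 < q ^ (n - 1) := pow_pos (by omega) _
    have hqq : (q - 1) * q ^ (n - 1) = q ^ n - q ^ (n - 1) := by
      rw [Nat.sub_one_mul]
      congr 1
      conv_rhs => rw [show n = 1 + (n - 1) by omega]
      rw [pow_add, pow_one]
    have : Sf.card * q ^ (n - 1) = (q - 1) * q ^ (n - 1) := by omega
    exact Nat.eq_of_mul_eq_mul_right hq0 this
  have hA : ∀ x y : R, A x y = if x * y = u then 1 else 0 := fun _ _ => rfl
  have hsymm : A.IsHermitian := by
    show Aᴴ = A
    ext x y
    rw [Matrix.conjTranspose_apply, hA, hA, star_trivial, mul_comm y x]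
  have htrA : A.trace = 0 := by
    show ∑ x : R, A x x = 0
    apply Finset.sum_eq_zero
    intro x _
    rw [hA, if_neg]
    intro hxx
    by_cases hx : IsUnit x
    · exact hun (hxx ▸ hx.mul hx)
    · have hxJ : x ∈ J := (hmem x).mpr hx
      exact hu0 (by rw [← hxx, hmulJ x x hxJ hxJ])
  have htrAA : (A * A).trace = 2 * ((q - 1 : ℕ) : ℝ) * ((q : ℝ) ^ (n - 1)) := by
    have e1 : ∀ x : R, (A * A) x x = ((univ.filter fun y => x * y = u).card : ℝ) := by
      intro x
      rw [Matrix.mul_apply, ← Finset.sum_boole]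
      apply Finset.sum_congr rfl
      intro y _
      rw [hA, hA, mul_comm y x]
      by_cases h : x * y = u <;> simp [h]
    have e2 : (A * A).trace = ∑ x : R, ((univ.filter fun y => x * y = u).card : ℝ) := by
      show ∑ x : R, (A * A) x x = _
      exact Finset.sum_congr rfl fun x _ => e1 x
    rw [e2, ← Finset.sum_filter_add_sum_filter_not univ (fun x : R => IsUnit x)]
    have e3 : ∑ x ∈ univ.filter (fun x : R => IsUnit x),
        ((univ.filter fun y => x * y = u).card : ℝ) = ((q ^ n - q ^ (n - 1) : ℕ) : ℝ) := by
      have estep : ∑ x ∈ univ.filter (fun x : R => IsUnit x),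
          ((univ.filter fun y => x * y = u).card : ℝ)
          = ∑ _x ∈ univ.filter (fun x : R => IsUnit x), (1 : ℝ) :=
        Finset.sum_congr rfl (fun x hx => by
          rw [hcount1 x u (Finset.mem_filter.mp hx).2, Nat.cast_one])
      rw [estep, Finset.sum_const, ← hUf, hUfcard]
      simp
    have e4 : ∑ x ∈ univ.filter (fun x : R => ¬ IsUnit x),
        ((univ.filter fun y => x * y = u).card : ℝ)
        = ((q - 1 : ℕ) : ℝ) * ((q ^ (n - 1) : ℕ) : ℝ) := by
      rw [← Finset.sum_filter_add_sum_filter_not (univ.filter (fun x : R => ¬ IsUnit x))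
        (fun x => ∃ y, x * y = u)]
      have e5 : (univ.filter (fun x : R => ¬ IsUnit x)).filter (fun x => ∃ y, x * y = u)
          = Sf := by
        rw [hSf]
        ext x
        simp only [Finset.mem_filter, Finset.mem_univ, true_and]
        try tauto
      have e6 : ∀ x ∈ (univ.filter (fun x : R => ¬ IsUnit x)).filter
          (fun x => ¬ ∃ y, x * y = u),
          ((univ.filter fun y => x * y = u).card : ℝ) = 0 := by
        intro x hx
        have hne := (Finset.mem_filter.mp hx).2
        rw [Finset.filter_false_of_mem, Finset.card_empty, Nat.cast_zero]
        intro y _ hy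
        exact hne ⟨y, hy⟩
      have estep2 : ∑ x ∈ Sf, ((univ.filter fun y => x * y = u).card : ℝ)
          = ∑ _x ∈ Sf, ((q ^ (n - 1) : ℕ) : ℝ) :=
        Finset.sum_congr rfl (fun x hx => by
          rw [hSf] at hx
          have hxm := Finset.mem_filter.mp hx
          obtain ⟨y, hy⟩ := hxm.2.2
          rw [hcount x u ((hmem x).mpr hxm.2.1)
            (fun h0 => hu0 (by rw [← hy, h0, zero_mul])) y hy])
      rw [Finset.sum_eq_zero e6, add_zero, e5, estep2, Finset.sum_const, hSfcard]
      push_cast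
      ring
    rw [e3, e4]
    have hle : q ^ (n - 1) ≤ q ^ n := Nat.pow_le_pow_right (by omega) (by omega)
    have hqe : ((q : ℝ)) ^ n = q * q ^ (n - 1) := by
      rw [← pow_succ']
      congr 1
      omega
    push_cast [Nat.cast_sub hle, Nat.cast_sub (show 1 ≤ q by omega)]
    linear_combination hqe
  have hABC : ∀ x w : R, IsUnit x →
      ∑ y : R, A x y * (∑ z : R, A y z * A z w)
        = (q : ℝ) ^ (n - 1) * (if x * w = u then 1 else 0) := by
    intro x w hx
    set y₀ : R := ↑hx.unit⁻¹ * u with hy₀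
    have hxy₀ : x * y₀ = u := by
      rw [hy₀, ← mul_assoc, IsUnit.mul_val_inv, one_mul]
    have hy₀J : y₀ ∈ J := (hmem y₀).mpr (fun hyu => hun (hxy₀ ▸ hx.mul hyu))
    have hy₀0 : y₀ ≠ 0 := fun h0 => hu0 (by rw [← hxy₀, h0, mul_zero])
    have e1 : ∀ y : R, x * y = u ↔ y = y₀ := by
      intro y
      constructor
      · intro h0
        have h1 : x * y = x * y₀ := h0.trans hxy₀.symm
        calc y = ↑hx.unit⁻¹ * (x * y) := by rw [← mul_assoc, IsUnit.val_inv_mul, one_mul]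
          _ = ↑hx.unit⁻¹ * (x * y₀) := by rw [h1]
          _ = y₀ := by rw [← mul_assoc, IsUnit.val_inv_mul, one_mul]
      · rintro rfl; exact hxy₀
    have e2 : ∑ y : R, A x y * (∑ z : R, A y z * A z w)
        = ∑ z : R, A y₀ z * A z w := by
      rw [Finset.sum_congr rfl (fun y _ => by
        rw [hA, if_congr (e1 y) rfl rfl, ite_mul, one_mul, zero_mul]),
        Finset.sum_ite_eq' univ y₀ (fun y => ∑ z : R, A y z * A z w),
        if_pos (Finset.mem_univ y₀)]
    rw [e2]
    by_cases hw : IsUnit w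
    · have hz : ∀ z : R, A y₀ z * A z w = 0 := by
        intro z
        rw [hA, hA]
        by_cases h1 : y₀ * z = u
        · have hzu : IsUnit z := by
            by_contra hz'
            exact hu0 (by rw [← h1, hmulJ y₀ z hy₀J ((hmem z).mpr hz')])
          have h2' : ¬ z * w = u := fun h2 => hun (h2 ▸ hzu.mul hw)
          rw [if_pos h1, if_neg h2', one_mul]
        · rw [if_neg h1, zero_mul]
      rw [Finset.sum_eq_zero (fun z _ => hz z), if_neg, mul_zero]
      intro h2
      exact hun (h2 ▸ hx.mul hw)
    · have hwJ : w ∈ J := (hmem w).mpr hw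
      have key : ∀ z : R, y₀ * z = u → z * w = x * w := by
        intro z hz
        have hzx : y₀ * (z - x) = 0 := by
          rw [mul_sub, hz, mul_comm y₀ x, hxy₀, sub_self]
        have hzxJ : z - x ∈ J := (hann y₀ (z - x) hy₀J hy₀0).mp hzx
        have h0 : (z - x) * w = 0 := hmulJ _ w hzxJ hwJ
        have h1 : z * w - x * w = 0 := by rw [← sub_mul]; exact h0
        exact sub_eq_zero.mp h1
      have e3 : ∀ z : R, A y₀ z * A z w
          = (if x * w = u then (1 : ℝ) else 0) * (if y₀ * z = u then 1 else 0) := by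
        intro z
        rw [hA, hA]
        by_cases h1 : y₀ * z = u
        · rw [if_pos h1, one_mul, mul_one, key z h1]
        · rw [if_neg h1, zero_mul, mul_zero]
      rw [Finset.sum_congr rfl (fun z _ => e3 z), ← Finset.mul_sum, Finset.sum_boole,
        hcount y₀ u hy₀J hy₀0 x (by rw [mul_comm]; exact hxy₀)]
      push_cast
      ring
  have h3 : A * A * A = ((q : ℝ) ^ (n - 1)) • A := by
    have hAT : Aᵀ = A := by
      ext x y
      rw [Matrix.transpose_apply, hA, hA, mul_comm y x]
    have hcube : ∀ x w : R, (A * A * A) x w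
        = ∑ y : R, A x y * (∑ z : R, A y z * A z w) := by
      intro x w
      rw [Matrix.mul_assoc, Matrix.mul_apply]
      exact Finset.sum_congr rfl (fun y _ => by rw [Matrix.mul_apply])
    have hsym3 : (A * A * A)ᵀ = A * A * A := by
      rw [Matrix.transpose_mul, Matrix.transpose_mul, hAT, Matrix.mul_assoc]
    ext x w
    rw [Matrix.smul_apply, hcube, smul_eq_mul]
    by_cases hx : IsUnit x
    · rw [hABC x w hx, hA]
    · by_cases hw : IsUnit w
      · have e' : (A * A * A) x w = (A * A * A) w x := by
          conv_lhs => rw [← hsym3]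
          rw [Matrix.transpose_apply]
        rw [← hcube x w, e', hcube w x, hABC w x hw, hA, mul_comm w x]
      · have hxJ := (hmem x).mpr hx
        have hwJ := (hmem w).mpr hw
        have hz : ∑ y : R, A x y * (∑ z : R, A y z * A z w) = 0 := by
          apply Finset.sum_eq_zero
          intro y _
          by_cases hxy : x * y = u
          · have hyu : IsUnit y := by
              by_contra hy'
              exact hu0 (by rw [← hxy, hmulJ x y hxJ ((hmem y).mpr hy')])
            have hinner : ∑ z : R, A y z * A z w = 0 := by
              apply Finset.sum_eq_zero
              intro z _
              by_cases hyz : y * z = u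
              · have hzJ : z ∈ J := by
                  rw [hmem]
                  intro hz'
                  exact hun (hyz ▸ hyu.mul hz')
                rw [hA z w, if_neg, mul_zero]
                exact fun hcon => hu0 (by rw [← hcon, hmulJ z w hzJ hwJ])
              · rw [hA y z, if_neg hyz, zero_mul]
            rw [hinner, mul_zero]
          · rw [hA x y, if_neg hxy, zero_mul]
        rw [hz, hA, if_neg, mul_zero]
        exact fun hcon => hu0 (by rw [← hcon, hmulJ x w hxJ hwJ])
  -- assemble via herm_aux
  have hcR : Fintype.card R = (q ^ n - 2 * q + 2) + 2 * (q - 1) := by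
    have h2q : 2 * q ≤ q ^ n := by
      have h1 : 2 * q ≤ q * q := Nat.mul_le_mul_right q hq2
      have h2 : q * q ≤ q ^ n := by
        calc q * q = q ^ 2 := (sq q).symm
          _ ≤ q ^ n := Nat.pow_le_pow_right (by omega) hn2
      omega
    rw [hcard]
    omega
  have hq0R : (0 : ℝ) < (q : ℝ) := by exact_mod_cast Nat.lt_of_lt_of_le Nat.zero_lt_two hq2
  have hcpos : (0 : ℝ) < (q : ℝ) ^ (n - 1) := pow_pos hq0R _
  obtain ⟨hdet, hcp⟩ := herm_aux A hsymm ((q : ℝ) ^ (n - 1)) hcpos (q - 1)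
    (q ^ n - 2 * q + 2) hcR h3 htrA htrAA
  set s : ℝ := Real.sqrt ((q : ℝ) ^ (n - 1)) with hs
  have hs0 : 0 < s := Real.sqrt_pos.mpr hcpos
  have hs2 : s ^ 2 = (q : ℝ) ^ (n - 1) := Real.sq_sqrt hcpos.le
  have h2q : 2 * q ≤ q ^ n := by
    have h1 : 2 * q ≤ q * q := Nat.mul_le_mul_right q hq2
    have h2 : q * q ≤ q ^ n := by
      calc q * q = q ^ 2 := (sq q).symm
        _ ≤ q ^ n := Nat.pow_le_pow_right (by omega) hn2
    omega
  refine ⟨?_, ?_, ?_⟩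
  · intro lam
    rw [hdet lam]
    have hsign : ((-1 : ℝ)) ^ (q ^ n - 2 * q + 2) = (-1 : ℝ) ^ q := by
      rcases Nat.even_or_odd q with hq | hq
      · have hqn : Even (q ^ n) := (Nat.even_pow).mpr ⟨hq, by omega⟩
        obtain ⟨t, ht⟩ := hqn
        have hz : Even (q ^ n - 2 * q + 2) := ⟨t - q + 1, by omega⟩
        rw [hz.neg_one_pow, hq.neg_one_pow]
      · have hqn : Odd (q ^ n) := hq.pow
        obtain ⟨t, ht⟩ := hqn
        have hz : Odd (q ^ n - 2 * q + 2) := ⟨t - q + 1, by omega⟩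
        rw [hz.neg_one_pow, hq.neg_one_pow]
    have hbase : (s - lam) * (-s - lam) = lam ^ 2 - (q : ℝ) ^ (n - 1) := by
      linear_combination -hs2
    calc (-lam) ^ (q ^ n - 2 * q + 2) * ((s - lam) ^ (q - 1) * (-s - lam) ^ (q - 1))
        = (-1 : ℝ) ^ (q ^ n - 2 * q + 2) * lam ^ (q ^ n - 2 * q + 2)
            * ((s - lam) * (-s - lam)) ^ (q - 1) := by
          rw [neg_pow, mul_pow]; try ring
      _ = (-1 : ℝ) ^ q * lam ^ (q ^ n - 2 * q + 2)
            * (lam ^ 2 - (q : ℝ) ^ (n - 1)) ^ (q - 1) := by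
          rw [hsign, hbase]
  · rw [hcp]
    have hXz : (X : ℝ[X]) ^ (q ^ n - 2 * q + 2) ≠ 0 := pow_ne_zero _ Polynomial.X_ne_zero
    have hXs : ((X : ℝ[X]) - C s) ^ (q - 1) ≠ 0 := pow_ne_zero _ (Polynomial.X_sub_C_ne_zero s)
    have hplus : ((X : ℝ[X]) + C s) = X - C (-s) := by rw [map_neg, sub_neg_eq_add]
    have hXp : ((X : ℝ[X]) + C s) ^ (q - 1) ≠ 0 := by
      rw [hplus]; exact pow_ne_zero _ (Polynomial.X_sub_C_ne_zero (-s))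
    rw [Polynomial.rootMultiplicity_mul (mul_ne_zero (mul_ne_zero hXz hXs) hXp),
      Polynomial.rootMultiplicity_mul (mul_ne_zero hXz hXs)]
    have hr1 : Polynomial.rootMultiplicity s ((X : ℝ[X]) ^ (q ^ n - 2 * q + 2)) = 0 := by
      apply Polynomial.rootMultiplicity_eq_zero
      intro h
      rw [Polynomial.IsRoot.def, Polynomial.eval_pow, Polynomial.eval_X] at h
      exact pow_ne_zero _ (ne_of_gt hs0) h
    have hr2 : Polynomial.rootMultiplicity s (((X : ℝ[X]) - C s) ^ (q - 1)) = q - 1 :=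
      Polynomial.rootMultiplicity_X_sub_C_pow s (q - 1)
    have hr3 : Polynomial.rootMultiplicity s (((X : ℝ[X]) + C s) ^ (q - 1)) = 0 := by
      apply Polynomial.rootMultiplicity_eq_zero
      intro h
      rw [Polynomial.IsRoot.def, Polynomial.eval_pow, Polynomial.eval_add,
        Polynomial.eval_X, Polynomial.eval_C] at h
      exact pow_ne_zero _ (ne_of_gt (by linarith : (0 : ℝ) < s + s)) h
    rw [hr1, hr2, hr3]
    omega
  · rw [hcp]
    have hXz : (X : ℝ[X]) ^ (q ^ n - 2 * q + 2) ≠ 0 := pow_ne_zero _ Polynomial.X_ne_zero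
    have hXs : ((X : ℝ[X]) - C s) ^ (q - 1) ≠ 0 := pow_ne_zero _ (Polynomial.X_sub_C_ne_zero s)
    have hplus : ((X : ℝ[X]) + C s) = X - C (-s) := by rw [map_neg, sub_neg_eq_add]
    have hXp : ((X : ℝ[X]) + C s) ^ (q - 1) ≠ 0 := by
      rw [hplus]; exact pow_ne_zero _ (Polynomial.X_sub_C_ne_zero (-s))
    rw [Polynomial.rootMultiplicity_mul (mul_ne_zero (mul_ne_zero hXz hXs) hXp),
      Polynomial.rootMultiplicity_mul (mul_ne_zero hXz hXs)]
    have hr1 : Polynomial.rootMultiplicity (-s) ((X : ℝ[X]) ^ (q ^ n - 2 * q + 2)) = 0 := by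
      apply Polynomial.rootMultiplicity_eq_zero
      intro h
      rw [Polynomial.IsRoot.def, Polynomial.eval_pow, Polynomial.eval_X] at h
      exact pow_ne_zero _ (neg_ne_zero.mpr (ne_of_gt hs0)) h
    have hr2 : Polynomial.rootMultiplicity (-s) (((X : ℝ[X]) - C s) ^ (q - 1)) = 0 := by
      apply Polynomial.rootMultiplicity_eq_zero
      intro h
      rw [Polynomial.IsRoot.def, Polynomial.eval_pow, Polynomial.eval_sub,
        Polynomial.eval_X, Polynomial.eval_C] at h
      exact pow_ne_zero _ (ne_of_lt (by linarith : -s - s < 0)) h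
    have hr3 : Polynomial.rootMultiplicity (-s) (((X : ℝ[X]) + C s) ^ (q - 1)) = q - 1 := by
      rw [hplus]
      exact Polynomial.rootMultiplicity_X_sub_C_pow (-s) (q - 1)
    rw [hr1, hr2, hr3]
    omega
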